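/- If G is a group with a limiting sequence pair, then G is cm-slender: every group homomorphism from a completely metrizable topological group to G has open kernel. -/

import Mathlib

universe u

def IsLimitingSequencePair {G : Type*} [Group G] (F : ℕ → Set G) (k : ℕ → ℕ) : Prop :=
  Monotone F ∧
  (∀ (n : ℕ) (g : G), ∃ m : ℕ, (fun x => g * x) '' F n ⊆ F m) ∧
  (∀ n : ℕ, {g : G | g ^ k n ∈ F n} = {1}) ∧
  (∀ m n : ℕ, m ≤ n → {g : G | g ^ k m ∈ F n} ⊆ F n)

/-- A group `G` is cm-slender if every group homomorphism from a completely
metrizable topological group to `G` has open kernel. -/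
def IsCMSlender (G : Type*) [Group G] : Prop :=
  ∀ (H : Type u) [Group H] [tH : TopologicalSpace H] [IsTopologicalGroup H],
    (∃ mH : MetricSpace H,
      mH.toUniformSpace.toTopologicalSpace = tH ∧ @CompleteSpace H mH.toUniformSpace) →
    ∀ φ : H →* G, IsOpen ((φ : H → G) ⁻¹' {1})

section Aux

open Filter Topology

/-- Index recursion: starting from `ν`, repeatedly apply the translation index function `τ`
along a list of (group element, exponent index) pairs. -/
def LSPnrec {G : Type*} [Group G] (τ : ℕ → G → ℕ) (l : List (G × ℕ)) (ν : ℕ) : ℕ → ℕ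
  | 0 => ν
  | j + 1 => τ (max (LSPnrec τ l ν j) (l.getD j (1, 0)).2) ((l.getD j (1, 0)).1)⁻¹

/-- Bound used for the exponent index chosen at each stage. -/
def LSPC {G : Type*} [Group G] (τ : ℕ → G → ℕ) (l : List (G × ℕ)) : ℕ :=
  (Finset.range (l.length + 1)).sup fun ν => LSPnrec τ l ν l.length

/-- Nested word `(a₁ * (a₂ * ( ⋯ * y)^{k e₂})^{k e₁})`. -/
def LSPnest {H : Type*} [Monoid H] (k : ℕ → ℕ) : List (H × ℕ) → H → H
  | [], y => y
  | p :: t, y => (p.1 * LSPnest k t y) ^ k p.2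

theorem LSPnest_continuous {H : Type*} [Monoid H] [TopologicalSpace H] [ContinuousMul H]
    (k : ℕ → ℕ) (l : List (H × ℕ)) : Continuous (LSPnest k l) := by
  induction l with
  | nil => exact continuous_id
  | cons p t ih => exact (continuous_const.mul ih).pow _

theorem LSPnest_append {H : Type*} [Monoid H] (k : ℕ → ℕ) (l : List (H × ℕ)) (p : H × ℕ)
    (y : H) : LSPnest k (l ++ [p]) y = LSPnest k l ((p.1 * y) ^ k p.2) := by
  induction l with
  | nil => rfl
  | cons q t ih => simp [LSPnest, ih]

theorem LSP_aux {G : Type*} [Group G] (F : ℕ → Set G) (k : ℕ → ℕ)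
    (hFk : IsLimitingSequencePair F k)
    (H : Type*) [Group H] [MetricSpace H] [IsTopologicalGroup H] [CompleteSpace H]
    (φ : H →* G) : IsOpen ((φ : H → G) ⁻¹' {1}) := by
  obtain ⟨hmono, htrans, hpow, hroot⟩ := hFk
  by_contra hopen
  -- Step A : every neighborhood of 1 contains a point outside the kernel
  have claim : ∀ U ∈ 𝓝 (1 : H), ∃ x ∈ U, φ x ≠ 1 := by
    by_contra hcl
    push_neg at hcl
    obtain ⟨U, hU, hUker⟩ := hcl
    apply hopen
    rw [isOpen_iff_mem_nhds]
    intro x hx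
    have hx1 : φ x = 1 := hx
    have cont : Continuous fun y : H => x⁻¹ * y := continuous_const.mul continuous_id
    have hpre : (fun y : H => x⁻¹ * y) ⁻¹' U ∈ 𝓝 x := by
      apply cont.continuousAt.preimage_mem_nhds
      simpa using hU
    refine Filter.mem_of_superset hpre ?_
    intro y hy
    have : φ (x⁻¹ * y) = 1 := hUker _ hy
    have : φ y = 1 := by
      have hxy : x * (x⁻¹ * y) = y := by group
      calc φ y = φ (x * (x⁻¹ * y)) := by rw [hxy]
        _ = φ x * φ (x⁻¹ * y) := map_mul _ _ _
        _ = 1 := by rw [hx1, this, one_mul]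
    simpa using this
  -- 1 belongs to every F n
  have h1F : ∀ n, (1 : G) ∈ F n := by
    intro n
    have : (1 : G) ∈ {g : G | g ^ k n ∈ F n} := by rw [hpow n]; rfl
    simpa using this
  -- translation index function
  choose τ hτ using htrans
  -- existence of good next stage
  have E : ∀ l : List (H × ℕ), ∃ p : H × ℕ,
      p.2 = LSPC τ (l.map fun q => (φ q.1, q.2)) ∧ φ p.1 ≠ 1 ∧
      ∀ n ≤ l.length,
        dist (LSPnest k (l.drop n) ((p.1 * 1) ^ k p.2)) (LSPnest k (l.drop n) 1)
          ≤ (1 / 2 : ℝ) ^ l.length := by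
    intro l
    set c := LSPC τ (l.map fun q => (φ q.1, q.2)) with hc
    have hev : ∀ᶠ x : H in 𝓝 1, ∀ n ∈ Finset.range (l.length + 1),
        dist (LSPnest k (l.drop n) ((x * 1) ^ k c)) (LSPnest k (l.drop n) 1)
          ≤ (1 / 2 : ℝ) ^ l.length := by
      rw [eventually_all_finset]
      intro n _
      have h1 : Continuous fun x : H => LSPnest k (l.drop n) ((x * 1) ^ k c) :=
        (LSPnest_continuous k _).comp ((continuous_id.mul continuous_const).pow _)
      have hcont : Tendsto (fun x : H => LSPnest k (l.drop n) ((x * 1) ^ k c)) (𝓝 1)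
          (𝓝 (LSPnest k (l.drop n) 1)) := by
        have := h1.tendsto 1
        simpa using this
      have hball := hcont (Metric.closedBall_mem_nhds (LSPnest k (l.drop n) 1)
        (by positivity : (0 : ℝ) < (1 / 2 : ℝ) ^ l.length))
      filter_upwards [hball] with x hx
      simpa [Metric.mem_closedBall] using hx
    obtain ⟨x, hxA, hxφ⟩ := claim _ hev
    exact ⟨(x, c), rfl, hxφ, fun n hn => hxA n (Finset.mem_range.mpr (by omega))⟩
  choose step hstep using E
  -- the history of choices
  set hist : ℕ → List (H × ℕ) :=
    fun n => Nat.rec [] (fun _ ih => ih ++ [step ih]) n with hhist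
  have hist_succ : ∀ n, hist (n + 1) = hist n ++ [step (hist n)] := fun n => rfl
  have hist_len : ∀ n, (hist n).length = n := by
    intro n
    induction n with
    | zero => rfl
    | succ n ih => rw [hist_succ n]; simp [ih]
  set h : ℕ → H := fun n => (step (hist n)).1 with hh
  set c : ℕ → ℕ := fun n => (step (hist n)).2 with hcdef
  have hist_get : ∀ j i, (hij : i < j) → ∀ (hh' : i < (hist j).length),
      (hist j)[i] = step (hist i) := by
    intro j
    induction j with
    | zero => omega
    | succ j ih =>
      intro i hij hh'
      rcases Nat.lt_or_ge i j with hlt | hge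
      · simp only [hist_succ j]
        rw [List.getElem_append_left (by rw [hist_len]; exact hlt)]
        exact ih i hlt _
      · have : i = j := by omega
        subst this
        simp only [hist_succ i]
        exact List.getElem_concat_length (by rw [hist_len]) _
  have hist_drop : ∀ j i, i < j →
      (hist j).drop i = step (hist i) :: (hist j).drop (i + 1) := by
    intro j i hij
    have hlen : i < (hist j).length := by rw [hist_len]; exact hij
    rw [List.drop_eq_getElem_cons hlen, hist_get j i hij hlen]
  -- the partial nested words
  set Q : ℕ → ℕ → H := fun n j => LSPnest k ((hist j).drop n) 1 with hQ
  have hQstep : ∀ n j, dist (Q n j) (Q n (j + 1)) ≤ 1 * (1 / 2 : ℝ) ^ j := by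
    intro n j
    rcases le_or_gt n j with hnj | hnj
    · have hdrop : (hist (j + 1)).drop n = (hist j).drop n ++ [step (hist j)] := by
        rw [hist_succ j, List.drop_append_of_le_length (by rw [hist_len]; exact hnj)]
      have hspec := (hstep (hist j)).2.2 n (by rw [hist_len]; exact hnj)
      rw [one_mul, dist_comm]
      calc dist (Q n (j + 1)) (Q n j)
          = dist (LSPnest k ((hist j).drop n)
              (((step (hist j)).1 * 1) ^ k (step (hist j)).2))
            (LSPnest k ((hist j).drop n) 1) := by
            rw [hQ]; simp only []; rw [hdrop, LSPnest_append]
        _ ≤ (1 / 2 : ℝ) ^ (hist j).length := hspec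
        _ = (1 / 2 : ℝ) ^ j := by rw [hist_len]
    · have h1 : (hist j).drop n = [] := by
        apply List.drop_eq_nil_of_le; rw [hist_len]; omega
      have h2 : (hist (j + 1)).drop n = [] := by
        apply List.drop_eq_nil_of_le
        exact le_of_eq_of_le (hist_len (j + 1)) (by omega)
      have : Q n j = Q n (j + 1) := by rw [hQ]; simp only []; rw [h1, h2]
      rw [this, dist_self]
      positivity
  have hcauchy : ∀ n, CauchySeq fun j => Q n j := fun n =>
    cauchySeq_of_le_geometric (1 / 2) 1 (by norm_num) (hQstep n)
  have hEx : ∀ n, ∃ x, Tendsto (fun j => Q n j) atTop (𝓝 x) := fun n =>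
    cauchySeq_tendsto_of_complete (hcauchy n)
  choose w hw using hEx
  -- the recursive identity for the limit words
  have hwrec : ∀ n, w n = (h n * w (n + 1)) ^ k (c n) := by
    intro n
    refine tendsto_nhds_unique (hw n) ?_
    have h2 : Tendsto (fun j => (h n * Q (n + 1) j) ^ k (c n)) atTop
        (𝓝 ((h n * w (n + 1)) ^ k (c n))) := by
      have hco : Continuous fun x : H => (h n * x) ^ k (c n) :=
        (continuous_const.mul continuous_id).pow _
      exact (hco.tendsto _).comp (hw (n + 1))
    refine h2.congr' ?_
    filter_upwards [eventually_ge_atTop (n + 1)] with j hj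
    rw [hQ]
    simp only []
    rw [hist_drop j n (by omega)]
    rfl
  have hb : ∀ n, φ (h n) ≠ 1 := fun n => (hstep (hist n)).2.1
  -- the G-side recursion
  have hgrec : ∀ n, φ (w n) = (φ (h n) * φ (w (n + 1))) ^ k (c n) := by
    intro n
    rw [hwrec n, map_pow, map_mul]
  -- index sequence
  set N : ℕ → ℕ :=
    fun n => Nat.rec (τ 0 (φ (w 0))) (fun j ih => τ (max ih (c j)) (φ (h j))⁻¹) n with hN
  have hN0 : N 0 = τ 0 (φ (w 0)) := rfl
  have hNsucc : ∀ n, N (n + 1) = τ (max (N n) (c n)) (φ (h n))⁻¹ := fun n => rfl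
  -- membership of limit word images
  have hmem : ∀ n, φ (w n) ∈ F (N n) := by
    intro n
    induction n with
    | zero =>
      rw [hN0]
      apply hτ 0 (φ (w 0))
      exact ⟨1, h1F 0, by simp⟩
    | succ n ih =>
      have h1 : φ (w n) ∈ F (max (N n) (c n)) := hmono (le_max_left _ _) ih
      have h2 : φ (h n) * φ (w (n + 1)) ∈ F (max (N n) (c n)) := by
        apply hroot (c n) _ (le_max_right _ _)
        rw [Set.mem_setOf_eq, ← hgrec n]
        exact h1
      rw [hNsucc n]
      apply hτ (max (N n) (c n)) (φ (h n))⁻¹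
      exact ⟨φ (h n) * φ (w (n + 1)), h2, by group⟩
  -- matching the a priori bound with the a posteriori indices
  have hmatch : ∀ n j, j ≤ n →
      LSPnrec τ ((hist n).map fun q => (φ q.1, q.2)) (N 0) j = N j := by
    intro n j
    induction j with
    | zero => intro _; rfl
    | succ j ih =>
      intro hjn
      have hj : j < n := by omega
      have hlen : j < ((hist n).map fun q => (φ q.1, q.2)).length := by
        rw [List.length_map, hist_len]; exact hj
      have hget : ((hist n).map fun q => (φ q.1, q.2)).getD j (1, 0)
          = (φ (h j), c j) := by
        rw [List.getD_eq_getElem _ _ hlen, List.getElem_map]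
        rw [hist_get n j hj (by rw [hist_len]; exact hj)]
      rw [LSPnrec, hget, ih (by omega), hNsucc j]
  have hkey : ∀ n, N 0 ≤ n → N n ≤ c n := by
    intro n hn
    have hc : c n = LSPC τ ((hist n).map fun q => (φ q.1, q.2)) := (hstep (hist n)).1
    rw [hc, LSPC]
    have hlen : ((hist n).map fun q => (φ q.1, q.2)).length = n := by
      rw [List.length_map, hist_len]
    rw [hlen]
    have hm' : N 0 ∈ Finset.range (n + 1) := Finset.mem_range.mpr (by omega)
    have hle := Finset.le_sup
      (f := fun ν => LSPnrec τ ((hist n).map fun q => (φ q.1, q.2)) ν n) hm'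
    exact le_trans (le_of_eq (hmatch n n le_rfl).symm) hle
  -- the killing step
  have kill : ∀ n, φ (w n) ∈ F (c n) → φ (h n) * φ (w (n + 1)) = 1 := by
    intro n hn
    have : φ (h n) * φ (w (n + 1)) ∈ {g : G | g ^ k (c n) ∈ F (c n)} := by
      rw [Set.mem_setOf_eq, ← hgrec n]
      exact hn
    rw [hpow (c n)] at this
    exact this
  set n₀ := N 0 with hn₀
  have e1 : φ (h (n₀ + 1)) * φ (w (n₀ + 2)) = 1 :=
    kill (n₀ + 1) (hmono (hkey (n₀ + 1) (by omega)) (hmem (n₀ + 1)))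
  have e2 : φ (w (n₀ + 1)) = 1 := by
    rw [hgrec (n₀ + 1), e1, one_pow]
  have e3 : φ (h n₀) * φ (w (n₀ + 1)) = 1 :=
    kill n₀ (hmono (hkey n₀ le_rfl) (hmem n₀))
  rw [e2, mul_one] at e3
  exact hb n₀ e3

end Aux

/-- A group with a limiting sequence pair is cm-slender. -/
theorem isCMSlender_of_limitingSequencePair
    {G : Type*} [Group G]
    (h : ∃ (F : ℕ → Set G) (k : ℕ → ℕ), IsLimitingSequencePair F k) :
    IsCMSlender.{u} G := by
  obtain ⟨F, k, hFk⟩ := h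
  intro H _ tH _ hm φ
  obtain ⟨mH, htop, hcomp⟩ := hm
  subst htop
  letI := mH
  haveI : CompleteSpace H := hcomp
  exact LSP_aux F k hFk H φ
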